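/- Canonical moments of matrix measures are invariant under affine transformations: if ν is the pushforward of the matrix measure μ on [0,1] under γ(x) = (b-a)x + a with a < b, then the canonical moments of ν (computed relative to the moment space of matrix measures on [a,b]) coincide with those of μ, whenever defined. In particular, the moments satisfy T_n = Σ_{i=0}^{n} C(n,i) a^{n-i}(b-a)^i S_i, and T_n - T_n^± = (b-a)^n (S_n - S_n^±). -/

import Mathlib

open MeasureTheory Matrix

/-- A (normalized, nonnegative definite, symmetric) `p×p` matrix measure
supported on the interval `[c,d]`, represented by a finite nonnegative base
measure together with a symmetric positive semidefinite matrix density. -/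
structure MatMeas (p : ℕ) (c d : ℝ) where
  base : Measure ℝ
  dens : ℝ → Matrix (Fin p) (Fin p) ℝ
  finite : IsFiniteMeasure base
  supp : base (Set.Icc c d)ᶜ = 0
  symm : ∀ x, (dens x).IsSymm
  psd : ∀ x, (dens x).PosSemidef
  integrable : ∀ i j, Integrable (fun x => dens x i j) base
  normalized : ∀ i j, (∫ x, dens x i j ∂base) = (1 : Matrix (Fin p) (Fin p) ℝ) i j

/-- The `k`-th (matrix) moment `S_k = ∫ x^k dμ(x)` of a matrix measure. -/
noncomputable def mmoment {p : ℕ} {c d : ℝ} (μ : MatMeas p c d) (k : ℕ) :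
    Matrix (Fin p) (Fin p) ℝ :=
  Matrix.of fun i j => ∫ x, x ^ k * μ.dens x i j ∂μ.base

/-- The matrix `μ(A)` assigned to a Borel set by a matrix measure. -/
noncomputable def mmOf {p : ℕ} {c d : ℝ} (μ : MatMeas p c d) (A : Set ℝ) :
    Matrix (Fin p) (Fin p) ℝ :=
  Matrix.of fun i j => ∫ x in A, μ.dens x i j ∂μ.base

/-- The set of possible `k`-th moments of matrix measures on `[c,d]` whose
moments of order `1,…,k-1` are prescribed by `S`. -/
def kthMomentSet (p : ℕ) (c d : ℝ) (k : ℕ) (S : ℕ → Matrix (Fin p) (Fin p) ℝ) :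
    Set (Matrix (Fin p) (Fin p) ℝ) :=
  { T | ∃ ν : MatMeas p c d, (∀ j, 1 ≤ j → j < k → mmoment ν j = S j) ∧ mmoment ν k = T }


/- ### helpers -/

open scoped ENNReal NNReal

lemma matMeas_ae {p : ℕ} {c d : ℝ} (ρ : MatMeas p c d) :
    ∀ᵐ x ∂ρ.base, x ∈ Set.Icc c d := by
  rw [ae_iff]
  have : {x : ℝ | ¬ x ∈ Set.Icc c d} = (Set.Icc c d)ᶜ := rfl
  rw [this, ρ.supp]

lemma integrable_pow_dens {p : ℕ} {c d : ℝ} (ρ : MatMeas p c d) (k : ℕ) (i j : Fin p) :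
    Integrable (fun x => x ^ k * ρ.dens x i j) ρ.base := by
  have hM : (0:ℝ) ≤ max |c| |d| := le_trans (abs_nonneg c) (le_max_left _ _)
  refine Integrable.mono' (((ρ.integrable i j).abs.const_mul ((max |c| |d|) ^ k))) ?_ ?_
  · exact ((continuous_pow k).aestronglyMeasurable).mul ((ρ.integrable i j).1)
  · filter_upwards [matMeas_ae ρ] with x hx
    have hxb : |x| ≤ max |c| |d| := by
      rcases hx with ⟨h1, h2⟩
      have hc1 : -|c| ≤ c := neg_abs_le c
      have hd1 : d ≤ |d| := le_abs_self d
      have hmc : |c| ≤ max |c| |d| := le_max_left _ _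
      have hmd : |d| ≤ max |c| |d| := le_max_right _ _
      rw [abs_le]
      constructor <;> linarith
    have : ‖x ^ k * ρ.dens x i j‖ = |x| ^ k * |ρ.dens x i j| := by
      rw [Real.norm_eq_abs, abs_mul, abs_pow]
    rw [this]
    exact mul_le_mul_of_nonneg_right (pow_le_pow_left₀ (abs_nonneg x) hxb k)
      (abs_nonneg _)

lemma mmoment_zero {p : ℕ} {c d : ℝ} (ρ : MatMeas p c d) :
    mmoment ρ 0 = 1 := by
  ext i j
  simpa [mmoment] using ρ.normalized i j

lemma mmoment_isSymm {p : ℕ} {c d : ℝ} (ρ : MatMeas p c d) (k : ℕ) :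
    (mmoment ρ k).IsSymm := by
  ext i j
  simp only [mmoment, Matrix.transpose_apply, Matrix.of_apply]
  congr 1
  funext x
  congr 1
  exact congrFun (congrFun ((ρ.symm x)) i) j

lemma quad_single {p : ℕ} (M : Matrix (Fin p) (Fin p) ℝ) (i j : Fin p) :
    (Pi.single i 1 : Fin p → ℝ) ⬝ᵥ M.mulVec (Pi.single j 1) = M i j := by
  rw [Matrix.mulVec_single, single_dotProduct]
  simp

lemma quadform_ext {p : ℕ} {A B : Matrix (Fin p) (Fin p) ℝ}
    (hA : A.IsSymm) (hB : B.IsSymm)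
    (h : ∀ v : Fin p → ℝ, v ⬝ᵥ A.mulVec v = v ⬝ᵥ B.mulVec v) : A = B := by
  ext i j
  have hii := h (Pi.single i 1)
  have hjj := h (Pi.single j 1)
  rw [quad_single, quad_single] at hii
  rw [quad_single, quad_single] at hjj
  have hij := h (Pi.single i 1 + Pi.single j 1)
  have expand : ∀ M : Matrix (Fin p) (Fin p) ℝ,
      (Pi.single i 1 + Pi.single j 1 : Fin p → ℝ) ⬝ᵥ
        M.mulVec (Pi.single i 1 + Pi.single j 1) = M i i + M i j + M j i + M j j := by
    intro M
    rw [Matrix.mulVec_add, add_dotProduct, dotProduct_add,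
      dotProduct_add, quad_single, quad_single,
      quad_single, quad_single]
    ring
  rw [expand, expand] at hij
  have hAs : A j i = A i j := by
    have := congrFun (congrFun hA i) j
    simpa [Matrix.transpose_apply] using this
  have hBs : B j i = B i j := by
    have := congrFun (congrFun hB i) j
    simpa [Matrix.transpose_apply] using this
  rw [hAs, hBs] at hij
  linarith

lemma isHermitian_real_isSymm {p : ℕ} {M : Matrix (Fin p) (Fin p) ℝ}
    (h : M.IsHermitian) : M.IsSymm := by
  have : Mᴴ = Mᵀ := by
    ext i j; simp [Matrix.conjTranspose_apply]
  rw [Matrix.IsHermitian, this] at h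
  exact h

lemma psd_quad_nonneg {p : ℕ} {M : Matrix (Fin p) (Fin p) ℝ}
    (h : M.PosSemidef) (v : Fin p → ℝ) : 0 ≤ v ⬝ᵥ M.mulVec v := by
  have := h.dotProduct_mulVec_nonneg v
  simpa using this

lemma psd_antisymm {p : ℕ} {M : Matrix (Fin p) (Fin p) ℝ}
    (h1 : M.PosSemidef) (h2 : (-M).PosSemidef) : M = 0 := by
  have hs : M.IsSymm := isHermitian_real_isSymm h1.1
  refine quadform_ext hs ?_ ?_
  · ext i j; simp
  · intro v
    have a1 := psd_quad_nonneg h1 v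
    have a2 := psd_quad_nonneg h2 v
    rw [Matrix.neg_mulVec, dotProduct_neg] at a2
    simp only [Matrix.zero_mulVec, dotProduct_zero]
    linarith

lemma psd_smul {p : ℕ} {M : Matrix (Fin p) (Fin p) ℝ} {r : ℝ}
    (hr : 0 ≤ r) (h : M.PosSemidef) : (r • M).PosSemidef := by
  constructor
  · have h1 := h.1
    rw [Matrix.IsHermitian] at h1 ⊢
    rw [Matrix.conjTranspose_smul, h1]
    simp
  · intro v
    exact (h.smul hr).2 v

lemma quad_expand {p : ℕ} (M : Matrix (Fin p) (Fin p) ℝ) (v : Fin p → ℝ) (r : ℝ) :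
    (v ⬝ᵥ M.mulVec v) * r = ∑ i, ∑ j, (v i * v j) * (r * M i j) := by
  simp only [dotProduct, Matrix.mulVec, Finset.mul_sum, Finset.sum_mul]
  refine Finset.sum_congr rfl fun i _ => ?_
  refine Finset.sum_congr rfl fun j _ => ?_
  ring

lemma integrable_quad_pow {p : ℕ} {c d : ℝ} (ρ : MatMeas p c d) (v : Fin p → ℝ) (k : ℕ) :
    Integrable (fun x => (v ⬝ᵥ (ρ.dens x).mulVec v) * x ^ k) ρ.base := by
  have : (fun x => (v ⬝ᵥ (ρ.dens x).mulVec v) * x ^ k)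
      = fun x => ∑ i, ∑ j, (v i * v j) * (x ^ k * ρ.dens x i j) := by
    funext x; exact quad_expand _ _ _
  rw [this]
  exact integrable_finset_sum _ fun i _ =>
    integrable_finset_sum _ fun j _ => (integrable_pow_dens ρ k i j).const_mul _

lemma integral_pow_quad {p : ℕ} {c d : ℝ} (ρ : MatMeas p c d) (v : Fin p → ℝ) (k : ℕ) :
    ∫ x, (v ⬝ᵥ (ρ.dens x).mulVec v) * x ^ k ∂ρ.base = v ⬝ᵥ (mmoment ρ k).mulVec v := by
  have key : (fun x => (v ⬝ᵥ (ρ.dens x).mulVec v) * x ^ k)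
      = fun x => ∑ i, ∑ j, (v i * v j) * (x ^ k * ρ.dens x i j) := by
    funext x; exact quad_expand _ _ _
  rw [key]
  rw [integral_finset_sum _ (fun i _ => integrable_finset_sum _ fun j _ =>
    (integrable_pow_dens ρ k i j).const_mul _)]
  have : ∀ i, (∫ x, ∑ j, (v i * v j) * (x ^ k * ρ.dens x i j) ∂ρ.base)
      = ∑ j, (v i * v j) * ∫ x, x ^ k * ρ.dens x i j ∂ρ.base := by
    intro i
    rw [integral_finset_sum _ (fun j _ => (integrable_pow_dens ρ k i j).const_mul _)]
    exact Finset.sum_congr rfl fun j _ => integral_const_mul _ _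
  simp only [this]
  simp only [mmoment, dotProduct, Matrix.mulVec, Matrix.of_apply, Finset.mul_sum,
    Finset.sum_mul]
  refine Finset.sum_congr rfl fun i _ => Finset.sum_congr rfl fun j _ => ?_
  ring

lemma setIntegral_quad {p : ℕ} {c d : ℝ} (ρ : MatMeas p c d) (v : Fin p → ℝ) (A : Set ℝ) :
    ∫ x in A, v ⬝ᵥ (ρ.dens x).mulVec v ∂ρ.base = v ⬝ᵥ (mmOf ρ A).mulVec v := by
  have key : (fun x => (v ⬝ᵥ (ρ.dens x).mulVec v))
      = fun x => ∑ i, ∑ j, (v i * v j) * ρ.dens x i j := by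
    funext x
    have := quad_expand (ρ.dens x) v 1
    simp only [mul_one, one_mul] at this
    exact this
  rw [key]
  rw [integral_finset_sum _ (fun i _ => integrable_finset_sum _ fun j _ =>
    ((ρ.integrable i j).restrict).const_mul _)]
  have : ∀ i, (∫ x in A, ∑ j, (v i * v j) * ρ.dens x i j ∂ρ.base)
      = ∑ j, (v i * v j) * ∫ x in A, ρ.dens x i j ∂ρ.base := by
    intro i
    rw [integral_finset_sum _ (fun j _ => ((ρ.integrable i j).restrict).const_mul _)]
    exact Finset.sum_congr rfl fun j _ => integral_const_mul _ _
  simp only [this]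
  simp only [mmOf, dotProduct, Matrix.mulVec, Matrix.of_apply, Finset.mul_sum,
    Finset.sum_mul]
  refine Finset.sum_congr rfl fun i _ => Finset.sum_congr rfl fun j _ => ?_
  ring

lemma affine_measurable (s t : ℝ) : Measurable fun x : ℝ => s * x + t :=
  (measurable_id.const_mul s).add_const t

lemma affine_emb {s : ℝ} (t : ℝ) (hs : s ≠ 0) :
    MeasurableEmbedding fun x : ℝ => s * x + t :=
  (affineHomeomorph s t hs).measurableEmbedding

lemma affine_inv_self {s : ℝ} (t : ℝ) (hs : s ≠ 0) (x : ℝ) :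
    (s * x + t - t) / s = x := by
  field_simp
  ring

lemma affine_preimage_Icc {s t c d : ℝ} (hs : 0 < s) :
    (fun x : ℝ => s * x + t) ⁻¹' Set.Icc (s * c + t) (s * d + t) = Set.Icc c d := by
  ext x
  simp only [Set.mem_preimage, Set.mem_Icc]
  constructor
  · rintro ⟨h1, h2⟩
    constructor <;> nlinarith
  · rintro ⟨h1, h2⟩
    constructor <;> nlinarith

/-- Pushforward of a matrix measure under an increasing affine map. -/
noncomputable def MatMeas.push {p : ℕ} {c d : ℝ} (ρ : MatMeas p c d) (s t c' d' : ℝ)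
    (hs : 0 < s) (hc : s * c + t = c') (hd : s * d + t = d') : MatMeas p c' d' where
  base := ρ.base.map (fun x => s * x + t)
  dens := fun y => ρ.dens ((y - t) / s)
  finite := by
    haveI := ρ.finite
    constructor
    rw [Measure.map_apply (affine_measurable s t) MeasurableSet.univ]
    exact measure_lt_top _ _
  supp := by
    rw [Measure.map_apply (affine_measurable s t) measurableSet_Icc.compl,
      Set.preimage_compl]
    rw [show Set.Icc c' d' = Set.Icc (s * c + t) (s * d + t) by rw [hc, hd],
      affine_preimage_Icc hs]
    exact ρ.supp
  symm := fun y => ρ.symm _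
  psd := fun y => ρ.psd _
  integrable := by
    intro i j
    rw [(affine_emb t hs.ne').integrable_map_iff]
    have : ((fun y => ρ.dens ((y - t) / s) i j) ∘ (fun x => s * x + t))
        = fun x => ρ.dens x i j := by
      funext x
      simp only [Function.comp_apply, affine_inv_self t hs.ne' x]
    rw [this]
    exact ρ.integrable i j
  normalized := by
    intro i j
    rw [(affine_emb t hs.ne').integral_map]
    have : ∀ x, ρ.dens ((s * x + t - t) / s) i j = ρ.dens x i j := by
      intro x; rw [affine_inv_self t hs.ne' x]
    simp only [this]
    exact ρ.normalized i j

lemma mmoment_push {p : ℕ} {c d : ℝ} (ρ : MatMeas p c d) (s t c' d' : ℝ)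
    (hs : 0 < s) (hc : s * c + t = c') (hd : s * d + t = d') (k : ℕ) :
    mmoment (ρ.push s t c' d' hs hc hd) k
      = ∑ i ∈ Finset.range (k + 1),
          ((k.choose i : ℝ) * t ^ (k - i) * s ^ i) • mmoment ρ i := by
  ext i j
  show (∫ y, y ^ k * (ρ.dens ((y - t) / s)) i j ∂(ρ.base.map (fun x => s * x + t)))
    = _
  rw [(affine_emb t hs.ne').integral_map]
  have step : ∀ x : ℝ, (s * x + t) ^ k * (ρ.dens ((s * x + t - t) / s)) i j
      = ∑ m ∈ Finset.range (k + 1),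
          ((k.choose m : ℝ) * t ^ (k - m) * s ^ m) * (x ^ m * ρ.dens x i j) := by
    intro x
    rw [affine_inv_self t hs.ne' x]
    rw [add_pow]
    rw [Finset.sum_mul]
    refine Finset.sum_congr rfl fun m _ => ?_
    rw [mul_pow]
    ring
  simp only [step]
  rw [integral_finset_sum _ (fun m _ => (integrable_pow_dens ρ m i j).const_mul _)]
  have rhs : (∑ m ∈ Finset.range (k + 1),
      ((k.choose m : ℝ) * t ^ (k - m) * s ^ m) • mmoment ρ m) i j
      = ∑ m ∈ Finset.range (k + 1),
        ((k.choose m : ℝ) * t ^ (k - m) * s ^ m) * ∫ x, x ^ m * ρ.dens x i j ∂ρ.base := by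
    rw [Matrix.sum_apply]
    refine Finset.sum_congr rfl fun m _ => ?_
    simp [mmoment]
  rw [rhs]
  refine Finset.sum_congr rfl fun m _ => ?_
  exact integral_const_mul _ _

lemma mmoment_congr {p : ℕ} {c d c₂ d₂ : ℝ} (ρ₁ : MatMeas p c d) (ρ₂ : MatMeas p c₂ d₂)
    (hb : ρ₁.base = ρ₂.base) (hd : ρ₁.dens = ρ₂.dens) (k : ℕ) :
    mmoment ρ₁ k = mmoment ρ₂ k := by
  unfold mmoment
  rw [hb, hd]

/-- Pushing a matrix measure on `[a,b]` to `[0,1]` and back gives the same moments. -/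
lemma mmoment_pushpull {p : ℕ} {a b : ℝ} (hab : a < b) (ρ : MatMeas p a b)
    (h1 : 0 < (b - a)⁻¹) (h2 : (b - a)⁻¹ * a + -((b - a)⁻¹ * a) = 0)
    (h3 : (b - a)⁻¹ * b + -((b - a)⁻¹ * a) = 1)
    (h4 : 0 < b - a) (h5 : (b - a) * 0 + a = a) (h6 : (b - a) * 1 + a = b) (k : ℕ) :
    mmoment ((ρ.push (b - a)⁻¹ (-((b - a)⁻¹ * a)) 0 1 h1 h2 h3).push (b - a) a a b
        h4 h5 h6) k = mmoment ρ k := by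
  have hba : b - a ≠ 0 := ne_of_gt (by linarith)
  apply mmoment_congr
  · show (ρ.base.map (fun x => (b - a)⁻¹ * x + -((b - a)⁻¹ * a))).map
        (fun x => (b - a) * x + a) = ρ.base
    rw [Measure.map_map (affine_measurable _ _) (affine_measurable _ _)]
    have : ((fun x => (b - a) * x + a) ∘ fun x => (b - a)⁻¹ * x + -((b - a)⁻¹ * a))
        = id := by
      funext x
      simp only [Function.comp_apply, id_eq]
      field_simp
      ring
    rw [this, Measure.map_id]
  · funext y
    show ρ.dens ((((y - a) / (b - a)) - -((b - a)⁻¹ * a)) / (b - a)⁻¹) = ρ.dens y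
    field_simp
    congr 1
    ring

lemma invert_triangular {p : ℕ} {s : ℝ} (t : ℝ) (hs : s ≠ 0)
    (F G : ℕ → Matrix (Fin p) (Fin p) ℝ)
    (m : ℕ)
    (h : ∀ k < m, ∑ i ∈ Finset.range (k + 1), ((k.choose i : ℝ) * t ^ (k - i) * s ^ i) • F i
               = ∑ i ∈ Finset.range (k + 1), ((k.choose i : ℝ) * t ^ (k - i) * s ^ i) • G i) :
    ∀ k < m, F k = G k := by
  intro k
  induction k using Nat.strong_induction_on with
  | _ k ih =>
    intro hk
    have hh := h k hk
    rw [Finset.sum_range_succ, Finset.sum_range_succ] at hh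
    have heq : ∑ i ∈ Finset.range k, ((k.choose i : ℝ) * t ^ (k - i) * s ^ i) • F i
        = ∑ i ∈ Finset.range k, ((k.choose i : ℝ) * t ^ (k - i) * s ^ i) • G i := by
      refine Finset.sum_congr rfl fun i hi => ?_
      rw [ih i (Finset.mem_range.mp hi) (lt_trans (Finset.mem_range.mp hi) hk)]
    rw [heq] at hh
    have : ((k.choose k : ℝ) * t ^ (k - k) * s ^ k) • F k
        = ((k.choose k : ℝ) * t ^ (k - k) * s ^ k) • G k := by
      exact add_left_cancel hh
    have hne : ((k.choose k : ℝ) * t ^ (k - k) * s ^ k) ≠ 0 := by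
      simp [Nat.choose_self, pow_ne_zero _ hs]
    exact smul_right_injective _ hne this

lemma quad_sum {p : ℕ} {ι : Type*} (s : Finset ι) (c : ι → ℝ)
    (M : ι → Matrix (Fin p) (Fin p) ℝ) (v : Fin p → ℝ) :
    v ⬝ᵥ (∑ m ∈ s, c m • M m).mulVec v = ∑ m ∈ s, c m * (v ⬝ᵥ (M m).mulVec v) := by
  induction s using Finset.cons_induction with
  | empty => simp
  | cons a s ha ih =>
    rw [Finset.sum_cons, Finset.sum_cons, Matrix.add_mulVec, dotProduct_add, ih,
      Matrix.smul_mulVec, dotProduct_smul, smul_eq_mul]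

lemma isSymm_sum {p : ℕ} {ι : Type*} (s : Finset ι) (c : ι → ℝ)
    (M : ι → Matrix (Fin p) (Fin p) ℝ) (h : ∀ m, (M m).IsSymm) :
    (∑ m ∈ s, c m • M m).IsSymm := by
  unfold Matrix.IsSymm
  rw [Matrix.transpose_sum]
  refine Finset.sum_congr rfl fun m _ => ?_
  rw [Matrix.transpose_smul, h m]

lemma mmoment_eq_affine {p : ℕ} {a b : ℝ} (hab : a < b)
    (μ : MatMeas p 0 1) (ν : MatMeas p a b)
    (hpush : ∀ A : Set ℝ, MeasurableSet A →
      mmOf ν A = mmOf μ ((fun x : ℝ => (b - a) * x + a) ⁻¹' A)) (k : ℕ) :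
    mmoment ν k = ∑ i ∈ Finset.range (k + 1),
        ((k.choose i : ℝ) * a ^ (k - i) * (b - a) ^ i) • mmoment μ i := by
  refine quadform_ext (mmoment_isSymm ν k)
    (isSymm_sum _ _ _ fun m => mmoment_isSymm μ m) fun v => ?_
  set γ : ℝ → ℝ := fun x => (b - a) * x + a with hγ
  set qν : ℝ → ℝ := fun x => v ⬝ᵥ (ν.dens x).mulVec v with hqν
  set qμ : ℝ → ℝ := fun x => v ⬝ᵥ (μ.dens x).mulVec v with hqμ
  have hqνint : Integrable qν ν.base := by
    have := integrable_quad_pow ν v 0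
    simpa using this
  have hqμint : Integrable qμ μ.base := by
    have := integrable_quad_pow μ v 0
    simpa using this
  have hqνnn : ∀ x, 0 ≤ qν x := fun x => psd_quad_nonneg (ν.psd x) v
  have hqμnn : ∀ x, 0 ≤ qμ x := fun x => psd_quad_nonneg (μ.psd x) v
  have hcoe : ∀ r : ℝ, ((r.toNNReal : ℝ≥0∞)) = ENNReal.ofReal r := fun r => rfl
  set mν : Measure ℝ := ν.base.withDensity (fun x => ((qν x).toNNReal : ℝ≥0∞)) with hmν
  set mμ : Measure ℝ := μ.base.withDensity (fun x => ((qμ x).toNNReal : ℝ≥0∞)) with hmμ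
  have hγm : Measurable γ := affine_measurable _ _
  have hmap : mν = mμ.map γ := by
    ext A hA
    rw [Measure.map_apply hγm hA, hmν, hmμ, withDensity_apply _ hA,
      withDensity_apply _ (hγm hA)]
    simp only [hcoe]
    rw [← ofReal_integral_eq_lintegral_ofReal hqνint.restrict
        (Filter.Eventually.of_forall hqνnn),
      ← ofReal_integral_eq_lintegral_ofReal hqμint.restrict
        (Filter.Eventually.of_forall hqμnn)]
    congr 1
    rw [hqν, hqμ, setIntegral_quad, setIntegral_quad, hpush A hA]
  have hqν' : AEMeasurable (fun x => (qν x).toNNReal) ν.base :=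
    measurable_real_toNNReal.comp_aemeasurable hqνint.1.aemeasurable
  have hqμ' : AEMeasurable (fun x => (qμ x).toNNReal) μ.base :=
    measurable_real_toNNReal.comp_aemeasurable hqμint.1.aemeasurable
  have e1 : ∫ y, y ^ k ∂mν = ∫ x, qν x * x ^ k ∂ν.base := by
    rw [hmν, integral_withDensity_eq_integral_smul₀ hqν' (fun y => y ^ k)]
    refine integral_congr_ae (Filter.Eventually.of_forall fun x => ?_)
    simp only [NNReal.smul_def, Real.coe_toNNReal _ (hqνnn x), smul_eq_mul]
  have e2 : ∫ y, y ^ k ∂mν = ∫ x, qμ x * (γ x) ^ k ∂μ.base := by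
    rw [hmap, integral_map hγm.aemeasurable
      ((continuous_pow k).aestronglyMeasurable), hmμ,
      integral_withDensity_eq_integral_smul₀ hqμ' (fun x => (γ x) ^ k)]
    refine integral_congr_ae (Filter.Eventually.of_forall fun x => ?_)
    simp only [NNReal.smul_def, Real.coe_toNNReal _ (hqμnn x), smul_eq_mul]
  have key : ∫ x, qν x * x ^ k ∂ν.base = ∫ x, qμ x * ((b - a) * x + a) ^ k ∂μ.base := by
    rw [← e1, e2]
  have lhs : v ⬝ᵥ (mmoment ν k).mulVec v = ∫ x, qν x * x ^ k ∂ν.base := by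
    rw [← integral_pow_quad ν v k]
  have step2 : ∀ x : ℝ, qμ x * ((b - a) * x + a) ^ k
      = ∑ m ∈ Finset.range (k + 1),
          ((k.choose m : ℝ) * a ^ (k - m) * (b - a) ^ m) * (qμ x * x ^ m) := by
    intro x
    rw [add_pow, Finset.mul_sum]
    refine Finset.sum_congr rfl fun m _ => ?_
    rw [mul_pow]
    ring
  rw [lhs, key]
  simp only [step2]
  rw [integral_finset_sum _ (fun m _ => (integrable_quad_pow μ v m).const_mul _)]
  rw [quad_sum]
  refine Finset.sum_congr rfl fun m _ => ?_
  rw [← integral_pow_quad μ v m]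
  exact integral_const_mul _ _

lemma extremal_transfer {p n : ℕ} {a b : ℝ} (hab : a < b)
    (μ : MatMeas p 0 1) (ν : MatMeas p a b)
    (hmom : ∀ k, mmoment ν k = ∑ i ∈ Finset.range (k + 1),
        ((k.choose i : ℝ) * a ^ (k - i) * (b - a) ^ i) • mmoment μ i)
    (ε : ℝ) (hε : ε ≠ 0)
    (W Z : Matrix (Fin p) (Fin p) ℝ)
    (hW : W ∈ kthMomentSet p 0 1 n (fun j => mmoment μ j))
    (hZ : Z ∈ kthMomentSet p a b n (fun j => mmoment ν j))
    (hWext : ∀ T ∈ kthMomentSet p 0 1 n (fun j => mmoment μ j), (ε • (T - W)).PosSemidef)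
    (hZext : ∀ T ∈ kthMomentSet p a b n (fun j => mmoment ν j), (ε • (T - Z)).PosSemidef) :
    Z = (∑ i ∈ Finset.range n,
        ((n.choose i : ℝ) * a ^ (n - i) * (b - a) ^ i) • mmoment μ i)
        + ((b - a) ^ n : ℝ) • W := by
  obtain ⟨μ', hμ'low, hμ'n⟩ := hW
  obtain ⟨ρ, hρlow, hρn⟩ := hZ
  have hba0 : (0:ℝ) < b - a := by linarith
  have h4 : 0 < b - a := hba0
  have h5 : (b - a) * 0 + a = a := by ring
  have h6 : (b - a) * 1 + a = b := by ring
  have h1 : 0 < (b - a)⁻¹ := inv_pos.mpr hba0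
  have h2 : (b - a)⁻¹ * a + -((b - a)⁻¹ * a) = 0 := by ring
  have h3 : (b - a)⁻¹ * b + -((b - a)⁻¹ * a) = 1 := by
    have h : b + -a = b - a := by ring
    rw [← mul_neg, ← mul_add, h]
    exact inv_mul_cancel₀ (ne_of_gt hba0)
  set ν' := μ'.push (b - a) a a b h4 h5 h6 with hν'
  have hν'mom : ∀ k, mmoment ν' k = ∑ i ∈ Finset.range (k + 1),
      ((k.choose i : ℝ) * a ^ (k - i) * (b - a) ^ i) • mmoment μ' i :=
    fun k => mmoment_push μ' (b - a) a a b h4 h5 h6 k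
  have hμ'eq : ∀ i, i < n → mmoment μ' i = mmoment μ i := by
    intro i hi
    rcases Nat.eq_zero_or_pos i with h0 | h01
    · rw [h0, mmoment_zero, mmoment_zero]
    · exact hμ'low i h01 hi
  have hν'low : ∀ j, 1 ≤ j → j < n → mmoment ν' j = mmoment ν j := by
    intro j hj1 hj2
    rw [hν'mom j, hmom j]
    refine Finset.sum_congr rfl fun i hi => ?_
    rw [hμ'eq i (lt_of_le_of_lt (Nat.lt_succ_iff.mp (Finset.mem_range.mp hi)) hj2)]
  have hEmem : mmoment ν' n ∈ kthMomentSet p a b n (fun j => mmoment ν j) :=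
    ⟨ν', hν'low, rfl⟩
  have hE : mmoment ν' n = (∑ i ∈ Finset.range n,
      ((n.choose i : ℝ) * a ^ (n - i) * (b - a) ^ i) • mmoment μ i)
      + ((b - a) ^ n : ℝ) • W := by
    rw [hν'mom n, Finset.sum_range_succ]
    congr 1
    · exact Finset.sum_congr rfl fun i hi => by rw [hμ'eq i (Finset.mem_range.mp hi)]
    · rw [hμ'n]
      simp
  set ρ' := ρ.push (b - a)⁻¹ (-((b - a)⁻¹ * a)) 0 1 h1 h2 h3 with hρ'
  have hρmom : ∀ k, mmoment ρ k = ∑ i ∈ Finset.range (k + 1),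
      ((k.choose i : ℝ) * a ^ (k - i) * (b - a) ^ i) • mmoment ρ' i := by
    intro k
    rw [← mmoment_pushpull hab ρ h1 h2 h3 h4 h5 h6 k]
    exact mmoment_push ρ' (b - a) a a b h4 h5 h6 k
  have htri : ∀ i < n, mmoment ρ' i = mmoment μ i := by
    refine invert_triangular a (ne_of_gt hba0) _ _ n ?_
    intro k hk
    rw [← hρmom k, ← hmom k]
    rcases Nat.eq_zero_or_pos k with h0 | h01
    · rw [h0, mmoment_zero, mmoment_zero]
    · exact hρlow k h01 hk
  have hZeq : Z = (∑ i ∈ Finset.range n,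
      ((n.choose i : ℝ) * a ^ (n - i) * (b - a) ^ i) • mmoment μ i)
      + ((b - a) ^ n : ℝ) • mmoment ρ' n := by
    rw [← hρn, hρmom n, Finset.sum_range_succ]
    congr 1
    · exact Finset.sum_congr rfl fun i hi => by rw [htri i (Finset.mem_range.mp hi)]
    · simp
  have hFmem : mmoment ρ' n ∈ kthMomentSet p 0 1 n (fun j => mmoment μ j) :=
    ⟨ρ', fun j _ hj2 => htri j hj2, rfl⟩
  have hp1 := hZext (mmoment ν' n) hEmem
  have hp2 := hWext (mmoment ρ' n) hFmem
  have key0 : ε • (mmoment ν' n - Z)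
      = -(((b - a) ^ n : ℝ) • (ε • (mmoment ρ' n - W))) := by
    rw [hE, hZeq]
    simp only [smul_add, smul_sub, smul_smul]
    rw [mul_comm ε ((b - a) ^ n)]
    abel
  have hpsd2 : (((b - a) ^ n : ℝ) • (ε • (mmoment ρ' n - W))).PosSemidef :=
    psd_smul (by positivity) hp2
  have hzero : ((b - a) ^ n : ℝ) • (ε • (mmoment ρ' n - W)) = 0 := by
    refine psd_antisymm hpsd2 ?_
    rw [← key0]
    exact hp1
  have hFW : mmoment ρ' n = W := by
    have hε2 : ((b - a) ^ n : ℝ) ≠ 0 := by positivity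
    rcases smul_eq_zero.mp hzero with h | h
    · exact absurd h hε2
    · rcases smul_eq_zero.mp h with h' | h'
      · exact absurd h' hε
      · exact sub_eq_zero.mp h'
  rw [hZeq, hFW]

/-- Canonical moments of matrix measures are invariant under affine
transformations: if `ν` is the pushforward of the matrix measure `μ` on `[0,1]`
under `γ(x) = (b-a)x + a` (`a < b`), then
(i) `T_n = Σ_{i=0}^n C(n,i) a^{n-i} (b-a)^i S_i`,
(ii) `T_n - T_n⁻ = (b-a)^n (S_n - S_n⁻)` and `T_n - T_n⁺ = (b-a)^n (S_n - S_n⁺)`,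
(iii) the canonical moments of `ν` (computed in the moment space of matrix
measures on `[a,b]`) coincide with those of `μ`, whenever defined.  Here
`Smin, Smax` (resp. `Tmin, Tmax`) are the extremal `n`-th moments given the
previous moments, and `R` (resp. `R'`) is the symmetric positive definite
square root of `Smax - Smin` (resp. `Tmax - Tmin`). -/
theorem canonical_moments_affine_invariant (p n : ℕ) (hp : 0 < p) (hn : 1 ≤ n)
    (a b : ℝ) (hab : a < b)
    (μ : MatMeas p 0 1) (ν : MatMeas p a b)
    (hpush : ∀ A : Set ℝ, MeasurableSet A →
      mmOf ν A = mmOf μ ((fun x : ℝ => (b - a) * x + a) ⁻¹' A))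
    (Smin Smax : Matrix (Fin p) (Fin p) ℝ)
    (hminMemS : Smin ∈ kthMomentSet p 0 1 n (fun j => mmoment μ j))
    (hminLeS : ∀ T ∈ kthMomentSet p 0 1 n (fun j => mmoment μ j), (T - Smin).PosSemidef)
    (hmaxMemS : Smax ∈ kthMomentSet p 0 1 n (fun j => mmoment μ j))
    (hmaxGeS : ∀ T ∈ kthMomentSet p 0 1 n (fun j => mmoment μ j), (Smax - T).PosSemidef)
    (Tmin Tmax : Matrix (Fin p) (Fin p) ℝ)
    (hminMemT : Tmin ∈ kthMomentSet p a b n (fun j => mmoment ν j))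
    (hminLeT : ∀ T ∈ kthMomentSet p a b n (fun j => mmoment ν j), (T - Tmin).PosSemidef)
    (hmaxMemT : Tmax ∈ kthMomentSet p a b n (fun j => mmoment ν j))
    (hmaxGeT : ∀ T ∈ kthMomentSet p a b n (fun j => mmoment ν j), (Tmax - T).PosSemidef)
    (hDS : (Smax - Smin).PosDef) (hDT : (Tmax - Tmin).PosDef)
    (R : Matrix (Fin p) (Fin p) ℝ) (hRsymm : R.IsSymm) (hRpd : R.PosDef)
    (hRR : R * R = Smax - Smin)
    (R' : Matrix (Fin p) (Fin p) ℝ) (hR'symm : R'.IsSymm) (hR'pd : R'.PosDef)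
    (hR'R' : R' * R' = Tmax - Tmin) :
    (mmoment ν n = ∑ i ∈ Finset.range (n + 1),
        ((n.choose i : ℝ) * a ^ (n - i) * (b - a) ^ i) • mmoment μ i) ∧
    (mmoment ν n - Tmin = ((b - a) ^ n : ℝ) • (mmoment μ n - Smin)) ∧
    (mmoment ν n - Tmax = ((b - a) ^ n : ℝ) • (mmoment μ n - Smax)) ∧
    R'⁻¹ * (mmoment ν n - Tmin) * R'⁻¹ = R⁻¹ * (mmoment μ n - Smin) * R⁻¹ := by
  have hmom := mmoment_eq_affine hab μ ν hpush
  have hκ : ((n.choose n : ℝ) * a ^ (n - n) * (b - a) ^ n) = (b - a) ^ n := by simp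
  have hTmin : Tmin = (∑ i ∈ Finset.range n,
      ((n.choose i : ℝ) * a ^ (n - i) * (b - a) ^ i) • mmoment μ i)
      + ((b - a) ^ n : ℝ) • Smin := by
    refine extremal_transfer hab μ ν hmom 1 one_ne_zero Smin Tmin hminMemS hminMemT
      (fun T hT => by simpa using hminLeS T hT)
      (fun T hT => by simpa using hminLeT T hT)
  have hTmax : Tmax = (∑ i ∈ Finset.range n,
      ((n.choose i : ℝ) * a ^ (n - i) * (b - a) ^ i) • mmoment μ i)
      + ((b - a) ^ n : ℝ) • Smax := by
    refine extremal_transfer hab μ ν hmom (-1) (by norm_num) Smax Tmax hmaxMemS hmaxMemT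
      (fun T hT => by
        have := hmaxGeS T hT
        simpa [neg_smul, one_smul, neg_sub] using this)
      (fun T hT => by
        have := hmaxGeT T hT
        simpa [neg_smul, one_smul, neg_sub] using this)
  have g2 : mmoment ν n - Tmin = ((b - a) ^ n : ℝ) • (mmoment μ n - Smin) := by
    rw [hmom n, hTmin, Finset.sum_range_succ, hκ, smul_sub]
    abel
  have g3 : mmoment ν n - Tmax = ((b - a) ^ n : ℝ) • (mmoment μ n - Smax) := by
    rw [hmom n, hTmax, Finset.sum_range_succ, hκ, smul_sub]
    abel
  refine ⟨hmom n, g2, g3, ?_⟩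
  have hc : (0:ℝ) < (b - a) ^ n := by
    have : (0:ℝ) < b - a := by linarith
    positivity
  set r := Real.sqrt ((b - a) ^ n) with hrdef
  have hr : 0 < r := Real.sqrt_pos.mpr hc
  have hrr : r * r = (b - a) ^ n := Real.mul_self_sqrt hc.le
  have hDD : Tmax - Tmin = ((b - a) ^ n : ℝ) • (Smax - Smin) := by
    calc Tmax - Tmin = (mmoment ν n - Tmin) - (mmoment ν n - Tmax) := by abel
      _ = ((b - a) ^ n : ℝ) • (mmoment μ n - Smin)
          - ((b - a) ^ n : ℝ) • (mmoment μ n - Smax) := by rw [g2, g3]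
      _ = ((b - a) ^ n : ℝ) • (Smax - Smin) := by
          simp only [smul_sub]; abel
  have hR'eq : R' = r • R := by
    open scoped MatrixOrder in
    refine (CFC.sq_eq_sq_iff (A := Matrix (Fin p) (Fin p) ℝ) R' (r • R)
      hR'pd.posSemidef.nonneg (psd_smul hr.le hRpd.posSemidef).nonneg).mp ?_
    rw [pow_two, pow_two, hR'R', smul_mul_smul_comm, hrr, hRR, hDD]
  have hRdet : IsUnit R.det := isUnit_iff_ne_zero.mpr hRpd.det_pos.ne'
  have hR'inv : R'⁻¹ = r⁻¹ • R⁻¹ := by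
    apply Matrix.inv_eq_right_inv
    rw [hR'eq, smul_mul_smul_comm, mul_inv_cancel₀ hr.ne',
      Matrix.mul_nonsing_inv R hRdet, one_smul]
  have hsc : r⁻¹ * (r⁻¹ * (b - a) ^ n) = 1 := by
    rw [← hrr]
    field_simp
  rw [g2, hR'inv, smul_mul_smul_comm, mul_smul_comm, smul_mul_assoc, smul_smul, hsc, one_smul]
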